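/- For type A₁^{(1)} and s₁ ≤ s₂, the map σ from the previous statement commutes with the Kashiwara operator ẽ₁ on the tensor products: for all (A, B) ∈ B^{1,s₁} ⊗ B^{1,s₂}, σ(ẽ₁(A ⊗ B)) = ẽ₁(σ(A ⊗ B)), with the convention σ(0) = 0. -/

import Mathlib

/-- `ẽ₁` on `B^{1,s'} ⊗ B^{1,t}` for type `A₁^{(1)}`: here `t` is the capacity of the
second factor, `ε₁(b₁) = b₁`, `φ₁(b₂) = t - b₂`. -/
def e1A1 (t : ℤ) (p : ℤ × ℤ) : Option (ℤ × ℤ) :=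
  if t - p.2 < p.1 then (if p.1 = 0 then none else some (p.1 - 1, p.2))
  else (if p.2 = 0 then none else some (p.1, p.2 - 1))

/-- `ẽ₀` on `B^{1,s₁} ⊗ B^{1,s₂}` for type `A₁^{(1)}`:
`ε₀(b) = s - b`, `φ₀(b) = b`, and `ẽ₀` adds 1 to the single entry. -/
def e0A1 (s₁ s₂ : ℤ) (p : ℤ × ℤ) : Option (ℤ × ℤ) :=
  if p.2 < s₁ - p.1 then (if p.1 = s₁ then none else some (p.1 + 1, p.2))
  else (if p.2 = s₂ then none else some (p.1, p.2 + 1))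

/-- The combinatorial R-matrix `σ : B^{1,s₁} ⊗ B^{1,s₂} → B^{1,s₂} ⊗ B^{1,s₁}`. -/
def sigmaA1 (s₁ s₂ : ℤ) (p : ℤ × ℤ) : ℤ × ℤ :=
  if p.1 + p.2 ≤ s₁ then p
  else if p.1 + p.2 ≤ s₂ then (2 * p.1 - s₁ + p.2, s₁ - p.1)
  else (p.1 + s₂ - s₁, s₁ - s₂ + p.2)

/-- `σ` commutes with `ẽ₁` (with the convention `σ(0) = 0`). -/
theorem stmt7 (s₁ s₂ : ℤ) (hs₁ : 0 ≤ s₁) (h12 : s₁ ≤ s₂) (A B : ℤ)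
    (hA0 : 0 ≤ A) (hA1 : A ≤ s₁) (hB0 : 0 ≤ B) (hB1 : B ≤ s₂) :
    Option.map (sigmaA1 s₁ s₂) (e1A1 s₂ (A, B)) =
      e1A1 s₁ (sigmaA1 s₁ s₂ (A, B)) := by
  simp only [e1A1, sigmaA1]
  split_ifs <;>
    simp only [Option.map_some, Option.map_none, sigmaA1, Option.some.injEq,
      Prod.mk.injEq, reduceCtorEq] <;>
    (try split_ifs) <;> (try simp_all) <;> omega
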